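/- In the Case I setting, for every tracial state τ on Pol(O_F^+) and all ρ,μ ∈ {1,…,r} one has τ(Tr(C_{ρμ}^*·C_{ρμ})) = 0. In particular, every entry of every block C_{ρμ} belongs to the Kac ideal J_KAC(Pol(O_F^+)). -/

import Mathlib

open scoped ComplexOrder

/-- The defining relations of `Pol(O_F⁺)`: `U` is unitary and `U·F = F·conj(U)`
(equivalently `U = F·conj(U)·F⁻¹`). -/
def OrthRel {ι : Type} [Fintype ι] [DecidableEq ι] {A : Type} [Ring A] [Algebra ℂ A]
    [StarRing A] (F : Matrix ι ι ℂ) (u : Matrix ι ι A) : Prop :=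
  u * u.conjTranspose = 1 ∧ u.conjTranspose * u = 1 ∧
    u * F.map (algebraMap ℂ A) = F.map (algebraMap ℂ A) * u.map star

/-- A presentation of the universal unital complex *-algebra `Pol(O_F⁺)`:
a unital complex *-algebra carrying a matrix of generators `u` satisfying the
defining relations, universal among all such. -/
structure PolO {ι : Type} [Fintype ι] [DecidableEq ι] (F : Matrix ι ι ℂ) where
  carrier : Type
  [isRing : Ring carrier]
  [isAlgebra : Algebra ℂ carrier]
  [isStarRing : StarRing carrier]
  [isStarModule : StarModule ℂ carrier]
  u : Matrix ι ι carrier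
  rel : OrthRel F u
  universal : ∀ (B : Type) [Ring B] [Algebra ℂ B] [StarRing B] [StarModule ℂ B]
      (v : Matrix ι ι B), OrthRel F v →
      ∃! φ : carrier →⋆ₐ[ℂ] B, ∀ j k, φ (u j k) = v j k

attribute [instance] PolO.isRing PolO.isAlgebra PolO.isStarRing PolO.isStarModule

/-- The defining relations of `Pol(U_N⁺)`: both `U` and `conj(U)` are unitary. -/
def BiUnitary {ι : Type} [Fintype ι] [DecidableEq ι] {A : Type} [Ring A] [Algebra ℂ A]
    [StarRing A] (u : Matrix ι ι A) : Prop :=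
  u * u.conjTranspose = 1 ∧ u.conjTranspose * u = 1 ∧
    u.map star * (u.map star).conjTranspose = 1 ∧ (u.map star).conjTranspose * u.map star = 1

/-- A presentation of the universal unital complex *-algebra `Pol(U_N⁺)` (`N = #ι`). -/
structure PolU (ι : Type) [Fintype ι] [DecidableEq ι] where
  carrier : Type
  [isRing : Ring carrier]
  [isAlgebra : Algebra ℂ carrier]
  [isStarRing : StarRing carrier]
  [isStarModule : StarModule ℂ carrier]
  u : Matrix ι ι carrier
  rel : BiUnitary u
  universal : ∀ (B : Type) [Ring B] [Algebra ℂ B] [StarRing B] [StarModule ℂ B]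
      (v : Matrix ι ι B), BiUnitary v →
      ∃! φ : carrier →⋆ₐ[ℂ] B, ∀ j k, φ (u j k) = v j k

attribute [instance] PolU.isRing PolU.isAlgebra PolU.isStarRing PolU.isStarModule

/-- A unital complex *-algebra is RFD if finite-dimensional *-representations
separate its points. -/
def IsRFD (A : Type) [Ring A] [Algebra ℂ A] [StarRing A] : Prop :=
  ∀ a : A, a ≠ 0 → ∃ (n : ℕ) (π : A →⋆ₐ[ℂ] Matrix (Fin n) (Fin n) ℂ), π a ≠ 0

/-- A tracial state on a unital complex *-algebra. -/
structure TracialState (A : Type) [Ring A] [Algebra ℂ A] [StarRing A] where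
  toFun : A →ₗ[ℂ] ℂ
  map_one' : toFun 1 = 1
  nonneg' : ∀ a : A, 0 ≤ toFun (star a * a)
  tracial' : ∀ a b : A, toFun (a * b) = toFun (b * a)

/-- The Kac ideal: elements killed by `τ(a^* a)` for every tracial state `τ`. -/
def kacIdeal (A : Type) [Ring A] [Algebra ℂ A] [StarRing A] : Set A :=
  {a : A | ∀ τ : TracialState A, τ.toFun (star a * a) = 0}

/-- The RFD ideal: the intersection of the kernels of all finite-dimensional
*-representations. -/
def rfdIdeal (A : Type) [Ring A] [Algebra ℂ A] [StarRing A] : Set A :=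
  {a : A | ∀ (n : ℕ) (π : A →⋆ₐ[ℂ] Matrix (Fin n) (Fin n) ℂ), π a = 0}

/-- A subset of a *-ring which is a two-sided ideal closed under the star operation. -/
def IsStarIdeal {A : Type} [Ring A] [StarRing A] (T : Set A) : Prop :=
  (0 : A) ∈ T ∧ (∀ a b, a ∈ T → b ∈ T → a + b ∈ T) ∧
    (∀ x a, a ∈ T → x * a ∈ T ∧ a * x ∈ T) ∧ (∀ a, a ∈ T → star a ∈ T)

/-- The two-sided *-ideal generated by a set. -/
def starIdealSpan {A : Type} [Ring A] [StarRing A] (S : Set A) : Set A :=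
  ⋂₀ {T : Set A | IsStarIdeal T ∧ S ⊆ T}

/-- The index set in the Case I setting: for each `ν = 1,…,r` a block `P_ν ⊕ Q_ν` of size
`2M_ν`, followed by a set `T` of size `s = N − 2K`. -/
abbrev CaseIIdx (r : ℕ) (M : Fin r → ℕ) (s : ℕ) : Type :=
  (Σ ν : Fin r, (Fin (M ν) ⊕ Fin (M ν))) ⊕ Fin s

/-- The Case I matrix `F`: block-diagonal with blocks `[[0, q_ν·I_{M_ν}], [q_ν⁻¹·I_{M_ν}, 0]]`
for `ν = 1,…,r`, followed by the identity `I_{N−2K}`. -/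
noncomputable def FCaseI (r : ℕ) (q : Fin r → ℝ) (M : Fin r → ℕ) (s : ℕ) :
    Matrix (CaseIIdx r M s) (CaseIIdx r M s) ℂ := fun a b =>
  match a, b with
  | .inl ⟨ν, .inl j⟩, .inl ⟨μ, .inr k⟩ =>
      if ν = μ ∧ (j : ℕ) = (k : ℕ) then ((q ν : ℝ) : ℂ) else 0
  | .inl ⟨ν, .inr j⟩, .inl ⟨μ, .inl k⟩ =>
      if ν = μ ∧ (j : ℕ) = (k : ℕ) then (((q ν)⁻¹ : ℝ) : ℂ) else 0
  | .inr p, .inr t => if p = t then 1 else 0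
  | _, _ => 0

section Aux

variable {r : ℕ} {q : Fin r → ℝ} {M : Fin r → ℕ} {s : ℕ}

/-- The flip involution exchanging `P_ν ↔ Q_ν` and fixing `T`. -/
def sFlip : CaseIIdx r M s → CaseIIdx r M s
  | .inl ⟨ν, .inl j⟩ => .inl ⟨ν, .inr j⟩
  | .inl ⟨ν, .inr j⟩ => .inl ⟨ν, .inl j⟩
  | .inr t => .inr t

lemma sFlip_sFlip (a : CaseIIdx r M s) : sFlip (sFlip a) = a := by
  rcases a with ⟨ν, j | j⟩ | t <;> rfl

/-- Row weight: `q_ν` on `P_ν`, `q_ν⁻¹` on `Q_ν`, `1` on `T`. -/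
noncomputable def bW (q : Fin r → ℝ) : CaseIIdx r M s → ℝ
  | .inl ⟨ν, .inl _⟩ => q ν
  | .inl ⟨ν, .inr _⟩ => (q ν)⁻¹
  | .inr _ => 1

/-- Sign weight: `1` on `P`, `-1` on `Q`, `0` on `T`. -/
def eW : CaseIIdx r M s → ℝ
  | .inl ⟨_, .inl _⟩ => 1
  | .inl ⟨_, .inr _⟩ => -1
  | .inr _ => 0

lemma eW_sFlip (a : CaseIIdx r M s) : eW (sFlip a) = - eW a := by
  rcases a with ⟨ν, j | j⟩ | t <;> simp [sFlip, eW]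

lemma bW_sFlip (a : CaseIIdx r M s) : bW q (sFlip a) = (bW q a)⁻¹ := by
  rcases a with ⟨ν, j | j⟩ | t <;> simp [sFlip, bW]

lemma bW_pos (hq0 : ∀ ν, 0 < q ν) (a : CaseIIdx r M s) : 0 < bW q a := by
  rcases a with ⟨ν, j | j⟩ | t <;> simp only [bW]
  · exact hq0 ν
  · exact inv_pos.mpr (hq0 ν)
  · exact one_pos

lemma sigCondL {ρ μ : Fin r} (j : Fin (M ρ)) (k : Fin (M μ)) :
    ((⟨μ, Sum.inl k⟩ : Σ ν, (Fin (M ν) ⊕ Fin (M ν))) = ⟨ρ, Sum.inl j⟩) ↔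
      (ρ = μ ∧ (j : ℕ) = (k : ℕ)) := by
  rw [Sigma.mk.inj_iff]
  constructor
  · rintro ⟨rfl, h⟩
    rw [heq_iff_eq, Sum.inl.injEq] at h
    exact ⟨rfl, by rw [h]⟩
  · rintro ⟨rfl, h⟩
    exact ⟨rfl, by rw [Fin.ext_iff.mpr h.symm]⟩

lemma sigCondR {ρ μ : Fin r} (j : Fin (M ρ)) (k : Fin (M μ)) :
    ((⟨μ, Sum.inr k⟩ : Σ ν, (Fin (M ν) ⊕ Fin (M ν))) = ⟨ρ, Sum.inr j⟩) ↔
      (ρ = μ ∧ (j : ℕ) = (k : ℕ)) := by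
  rw [Sigma.mk.inj_iff]
  constructor
  · rintro ⟨rfl, h⟩
    rw [heq_iff_eq, Sum.inr.injEq] at h
    exact ⟨rfl, by rw [h]⟩
  · rintro ⟨rfl, h⟩
    exact ⟨rfl, by rw [Fin.ext_iff.mpr h.symm]⟩

lemma sigCondLR {ρ μ : Fin r} (j : Fin (M ρ)) (k : Fin (M μ)) :
    ¬ ((⟨μ, Sum.inl k⟩ : Σ ν, (Fin (M ν) ⊕ Fin (M ν))) = ⟨ρ, Sum.inr j⟩) := by
  rw [Sigma.mk.inj_iff]
  rintro ⟨rfl, h⟩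
  rw [heq_iff_eq] at h
  exact Sum.inl_ne_inr h

lemma sigCondRL {ρ μ : Fin r} (j : Fin (M ρ)) (k : Fin (M μ)) :
    ¬ ((⟨μ, Sum.inr k⟩ : Σ ν, (Fin (M ν) ⊕ Fin (M ν))) = ⟨ρ, Sum.inl j⟩) := by
  rw [Sigma.mk.inj_iff]
  rintro ⟨rfl, h⟩
  rw [heq_iff_eq] at h
  exact Sum.inr_ne_inl h

lemma FCaseI_eq (a c : CaseIIdx r M s) :
    FCaseI r q M s a c = if c = sFlip a then ((bW q a : ℝ) : ℂ) else 0 := by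
  rcases a with ⟨ρ, j | j⟩ | t <;> rcases c with ⟨μ, k | k⟩ | p <;>
    simp only [FCaseI, sFlip, bW]
  · exact (if_neg (fun h => sigCondLR j k (Sum.inl.inj h))).symm
  · exact if_congr ((sigCondR j k).symm.trans Sum.inl_injective.eq_iff.symm) rfl rfl
  · exact (if_neg (fun h => by cases h)).symm
  · exact if_congr ((sigCondL j k).symm.trans Sum.inl_injective.eq_iff.symm) rfl rfl
  · exact (if_neg (fun h => sigCondRL j k (Sum.inl.inj h))).symm
  · exact (if_neg (fun h => by cases h)).symm
  · exact (if_neg (fun h => by cases h)).symm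
  · exact (if_neg (fun h => by cases h)).symm
  · exact if_congr (eq_comm.trans Sum.inr_injective.eq_iff.symm) Complex.ofReal_one.symm rfl

end Aux

section Aux2

variable {r : ℕ} {q : Fin r → ℝ} {M : Fin r → ℕ} {s : ℕ}

lemma trace_smul_star {A : Type} [Ring A] [Algebra ℂ A] [StarRing A] [StarModule ℂ A]
    (τ : TracialState A) (t : ℝ) (a b : A) (h : a = ((t : ℝ) : ℂ) • star b) :
    τ.toFun (star a * a) = ((t ^ 2 : ℝ) : ℂ) * τ.toFun (star b * b) := by
  subst h
  have hst : star ((t : ℝ) : ℂ) = ((t : ℝ) : ℂ) := by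
    simp [Complex.star_def, Complex.conj_ofReal]
  rw [star_smul, star_star, hst, smul_mul_smul_comm, map_smul, smul_eq_mul,
    τ.tracial' b (star b)]
  push_cast
  ring

lemma u_entry (hq0 : ∀ ν, 0 < q ν) (P : PolO (FCaseI r q M s)) (a b : CaseIIdx r M s) :
    P.u a b = (((bW q a / bW q b : ℝ)) : ℂ) • star (P.u (sFlip a) (sFlip b)) := by
  classical
  have H : (P.u * (FCaseI r q M s).map (algebraMap ℂ P.carrier)) a (sFlip b)
      = ((FCaseI r q M s).map (algebraMap ℂ P.carrier) * P.u.map star) a (sFlip b) := by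
    rw [P.rel.2.2]
  rw [Matrix.mul_apply, Matrix.mul_apply] at H
  simp only [Matrix.map_apply] at H
  have hL : ∀ c, FCaseI r q M s c (sFlip b) = if c = b then ((bW q b : ℝ) : ℂ) else 0 := by
    intro c
    rw [FCaseI_eq]
    rcases eq_or_ne c b with rfl | h
    · rw [if_pos rfl, if_pos rfl]
    · rw [if_neg (fun hc => h (by rw [← sFlip_sFlip c, ← hc, sFlip_sFlip])), if_neg h]
  have h1 : ∑ c, P.u a c * algebraMap ℂ P.carrier (FCaseI r q M s c (sFlip b))
      = ((bW q b : ℝ) : ℂ) • P.u a b := by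
    rw [Finset.sum_eq_single b]
    · rw [hL b, if_pos rfl, Algebra.algebraMap_eq_smul_one, mul_smul_comm, mul_one]
    · intro c _ hc
      rw [hL c, if_neg hc, map_zero, mul_zero]
    · intro hb; exact absurd (Finset.mem_univ b) hb
  have h2 : ∑ c, algebraMap ℂ P.carrier (FCaseI r q M s a c) * star (P.u c (sFlip b))
      = ((bW q a : ℝ) : ℂ) • star (P.u (sFlip a) (sFlip b)) := by
    rw [Finset.sum_eq_single (sFlip a)]
    · rw [FCaseI_eq, if_pos rfl, Algebra.algebraMap_eq_smul_one, smul_mul_assoc, one_mul]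
    · intro c _ hc
      rw [FCaseI_eq, if_neg hc, map_zero, zero_mul]
    · intro hb; exact absurd (Finset.mem_univ _) hb
  rw [h1, h2] at H
  have hb0 : ((bW q b : ℝ) : ℂ) ≠ 0 := Complex.ofReal_ne_zero.mpr (bW_pos hq0 b).ne'
  have := congrArg (fun z => ((bW q b : ℝ) : ℂ)⁻¹ • z) H
  simp only [inv_smul_smul₀ hb0, smul_smul] at this
  rw [this]
  congr 1
  rw [div_eq_inv_mul]
  push_cast
  ring

lemma bW_lt (hq0 : ∀ ν, 0 < q ν) (hq1 : ∀ ν, q ν < 1) {a b : CaseIIdx r M s}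
    (h : eW a < eW b) : bW q b < bW q a := by
  rcases a with ⟨ν, j | j⟩ | t <;> rcases b with ⟨μ, k | k⟩ | p <;>
      simp only [eW, bW] at h ⊢ <;> try linarith
  · exact lt_trans (hq1 μ) ((one_lt_inv₀ (hq0 ν)).mpr (hq1 ν))
  · exact (one_lt_inv₀ (hq0 ν)).mpr (hq1 ν)
  · exact hq1 μ

lemma term_neg (hq0 : ∀ ν, 0 < q ν) (hq1 : ∀ ν, q ν < 1) {a b : CaseIIdx r M s}
    (h : eW a ≠ eW b) : (eW a - eW b) * (1 - (bW q b / bW q a) ^ 2) < 0 := by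
  rcases h.lt_or_gt with h | h
  · have hba := bW_lt hq0 hq1 h
    have h2 : (bW q b / bW q a) ^ 2 < 1 :=
      pow_lt_one₀ (div_nonneg (bW_pos hq0 b).le (bW_pos hq0 a).le)
        ((div_lt_one (bW_pos hq0 a)).mpr hba) two_ne_zero
    exact mul_neg_of_neg_of_pos (by linarith) (by linarith)
  · have hba := bW_lt hq0 hq1 h
    have h2 : 1 < (bW q b / bW q a) ^ 2 :=
      one_lt_pow₀ ((one_lt_div (bW_pos hq0 a)).mpr hba) two_ne_zero
    exact mul_neg_of_pos_of_neg (by linarith) (by linarith)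

lemma eW_sum : ∑ a : CaseIIdx r M s, eW a = 0 := by
  rw [Fintype.sum_sum_type]
  have h2 : ∀ t : Fin s, eW (r := r) (M := M) (s := s) (Sum.inr t) = 0 := fun _ => rfl
  have h1 : ∑ x : (ν : Fin r) × (Fin (M ν) ⊕ Fin (M ν)),
      eW (M := M) (s := s) (Sum.inl x) = 0 := by
    rw [← Finset.univ_sigma_univ, Finset.sum_sigma]
    refine Finset.sum_eq_zero fun ν _ => ?_
    rw [Fintype.sum_sum_type]
    have ha : ∀ j : Fin (M ν), eW (M := M) (s := s) (Sum.inl ⟨ν, Sum.inl j⟩) = 1 := fun _ => rfl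
    have hb : ∀ j : Fin (M ν), eW (M := M) (s := s) (Sum.inl ⟨ν, Sum.inr j⟩) = -1 := fun _ => rfl
    simp [ha, hb]
  simp [h1, h2]

end Aux2

section Aux3

variable {r : ℕ} {q : Fin r → ℝ} {M : Fin r → ℕ} {s : ℕ}

lemma col_sum (P : PolO (FCaseI r q M s)) (τ : TracialState P.carrier)
    (b : CaseIIdx r M s) :
    ∑ a, τ.toFun (star (P.u a b) * P.u a b) = 1 := by
  have H : (P.u.conjTranspose * P.u) b b = (1 : Matrix _ _ P.carrier) b b := by
    rw [P.rel.2.1]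
  rw [Matrix.mul_apply, Matrix.one_apply_eq] at H
  simp only [Matrix.conjTranspose_apply] at H
  calc ∑ a, τ.toFun (star (P.u a b) * P.u a b)
      = τ.toFun (∑ a, star (P.u a b) * P.u a b) := (map_sum _ _ _).symm
    _ = 1 := by rw [H, τ.map_one']

lemma row_sum (P : PolO (FCaseI r q M s)) (τ : TracialState P.carrier)
    (a : CaseIIdx r M s) :
    ∑ b, τ.toFun (star (P.u a b) * P.u a b) = 1 := by
  have H : (P.u * P.u.conjTranspose) a a = (1 : Matrix _ _ P.carrier) a a := by
    rw [P.rel.1]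
  rw [Matrix.mul_apply, Matrix.one_apply_eq] at H
  simp only [Matrix.conjTranspose_apply] at H
  calc ∑ b, τ.toFun (star (P.u a b) * P.u a b)
      = ∑ b, τ.toFun (P.u a b * star (P.u a b)) :=
        Finset.sum_congr rfl fun b _ => τ.tracial' _ _
    _ = τ.toFun (∑ b, P.u a b * star (P.u a b)) := (map_sum _ _ _).symm
    _ = 1 := by rw [H, τ.map_one']

lemma key_vanish (hq0 : ∀ ν, 0 < q ν) (hq1 : ∀ ν, q ν < 1) (P : PolO (FCaseI r q M s))
    (τ : TracialState P.carrier) {a₀ b₀ : CaseIIdx r M s} (hab : eW a₀ ≠ eW b₀) :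
    τ.toFun (star (P.u a₀ b₀) * P.u a₀ b₀) = 0 := by
  classical
  set x : CaseIIdx r M s → CaseIIdx r M s → ℂ :=
    fun a b => τ.toFun (star (P.u a b) * P.u a b) with hxdef
  have hx0 : ∀ a b, 0 ≤ x a b := fun a b => τ.nonneg' _
  have hflip : ∀ a b, x a b
      = (((bW q a / bW q b) ^ 2 : ℝ) : ℂ) * x (sFlip a) (sFlip b) :=
    fun a b => trace_smul_star τ _ _ _ (u_entry hq0 P a b)
  have he : ∑ a : CaseIIdx r M s, ((eW a : ℝ) : ℂ) = 0 := by
    rw [← Complex.ofReal_sum, eW_sum, Complex.ofReal_zero]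
  -- S1
  have hA : ∑ a, ∑ b, ((eW a : ℝ) : ℂ) * x a b = 0 := by
    rw [← he]
    refine Finset.sum_congr rfl fun a _ => ?_
    rw [← Finset.mul_sum, row_sum P τ a, mul_one]
  have hB : ∑ a, ∑ b, ((eW b : ℝ) : ℂ) * x a b = 0 := by
    rw [Finset.sum_comm, ← he]
    refine Finset.sum_congr rfl fun b _ => ?_
    rw [← Finset.mul_sum, col_sum P τ b, mul_one]
  have hS1 : ∑ a, ∑ b, ((eW a - eW b : ℝ) : ℂ) * x a b = 0 := by
    have expand : ∀ a b : CaseIIdx r M s, ((eW a - eW b : ℝ) : ℂ) * x a b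
        = ((eW a : ℝ) : ℂ) * x a b - ((eW b : ℝ) : ℂ) * x a b := by
      intro a b; push_cast; ring
    simp only [expand, Finset.sum_sub_distrib]
    rw [hA, hB, sub_zero]
  -- S2
  set σE : CaseIIdx r M s ≃ CaseIIdx r M s :=
    Function.Involutive.toPerm sFlip sFlip_sFlip with hσE
  have hσapp : ∀ a, σE a = sFlip a := fun _ => rfl
  set G : CaseIIdx r M s → CaseIIdx r M s → ℂ :=
    fun a b => ((eW a - eW b : ℝ) : ℂ) * x (sFlip a) (sFlip b) with hGdef
  have hS2 : ∑ a, ∑ b, G a b = 0 := by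
    have h1 : ∑ a, ∑ b, G a b = ∑ a, ∑ b, G (sFlip a) (sFlip b) := by
      calc ∑ a, ∑ b, G a b
          = ∑ a, ∑ b, G (sFlip a) b := (Equiv.sum_comp σE (fun a => ∑ b, G a b)).symm
        _ = ∑ a, ∑ b, G (sFlip a) (sFlip b) :=
            Finset.sum_congr rfl fun a _ => (Equiv.sum_comp σE (G (sFlip a))).symm
    have h2 : ∀ a b, G (sFlip a) (sFlip b) = -(((eW a - eW b : ℝ) : ℂ) * x a b) := by
      intro a b
      simp only [hGdef]
      rw [sFlip_sFlip, sFlip_sFlip, eW_sFlip, eW_sFlip]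
      push_cast
      ring
    have h3 : ∑ a, ∑ b, G a b = -∑ a, ∑ b, ((eW a - eW b : ℝ) : ℂ) * x a b := by
      rw [h1]
      simp only [h2, Finset.sum_neg_distrib]
    have := h3
    rw [hS1, neg_zero] at this
    exact this
  -- combined sum
  have hS : ∑ a, ∑ b,
      (((eW a - eW b) * (1 - (bW q b / bW q a) ^ 2) : ℝ) : ℂ) * x a b = 0 := by
    have expand : ∀ a b : CaseIIdx r M s,
        (((eW a - eW b) * (1 - (bW q b / bW q a) ^ 2) : ℝ) : ℂ) * x a b
          = ((eW a - eW b : ℝ) : ℂ) * x a b - G a b := by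
      intro a b
      simp only [hGdef]
      rw [hflip a b]
      have hba : ((bW q b / bW q a) ^ 2 : ℝ) * ((bW q a / bW q b) ^ 2 : ℝ) = 1 := by
        have h1 := (bW_pos hq0 a).ne'
        have h2 := (bW_pos hq0 b).ne'
        field_simp
      have hba' : (((bW q b / bW q a) ^ 2 : ℝ) : ℂ) * (((bW q a / bW q b) ^ 2 : ℝ) : ℂ) = 1 := by
        rw [← Complex.ofReal_mul, hba, Complex.ofReal_one]
      push_cast at hba' ⊢
      linear_combination (-(((eW a : ℝ) : ℂ) - ((eW b : ℝ) : ℂ)) *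
        x (sFlip a) (sFlip b)) * hba'
    simp only [expand, Finset.sum_sub_distrib]
    rw [hS1, hS2, sub_zero]
  -- termwise nonpositivity
  have hterm_np : ∀ a b : CaseIIdx r M s,
      (((eW a - eW b) * (1 - (bW q b / bW q a) ^ 2) : ℝ) : ℂ) * x a b ≤ 0 := by
    intro a b
    rcases eq_or_ne (eW a) (eW b) with h | h
    · rw [h, sub_self, zero_mul, Complex.ofReal_zero, zero_mul]
    · have ht := term_neg (M := M) (s := s) hq0 hq1 h
      have h2 : (0 : ℂ) ≤
          ((-((eW a - eW b) * (1 - (bW q b / bW q a) ^ 2)) : ℝ) : ℂ) * x a b :=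
        mul_nonneg (Complex.zero_le_real.mpr (by linarith)) (hx0 a b)
      have h3 : (((eW a - eW b) * (1 - (bW q b / bW q a) ^ 2) : ℝ) : ℂ) * x a b
          = -(((-((eW a - eW b) * (1 - (bW q b / bW q a) ^ 2)) : ℝ) : ℂ) * x a b) := by
        push_cast; ring
      rw [h3]
      exact neg_nonpos.mpr h2
  have hout := (Finset.sum_eq_zero_iff_of_nonpos
      (fun a _ => Finset.sum_nonpos (fun b _ => hterm_np a b))).mp hS
  have hin := (Finset.sum_eq_zero_iff_of_nonpos (fun b _ => hterm_np a₀ b)).mp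
      (hout a₀ (Finset.mem_univ a₀)) b₀ (Finset.mem_univ b₀)
  have hc : (((eW a₀ - eW b₀) * (1 - (bW q b₀ / bW q a₀) ^ 2) : ℝ) : ℂ) ≠ 0 :=
    Complex.ofReal_ne_zero.mpr (term_neg (M := M) (s := s) hq0 hq1 hab).ne
  exact (mul_eq_zero.mp hin).resolve_left hc

end Aux3


/-- in the Case I setting, every tracial state `τ` on `Pol(O_F⁺)` satisfies
`τ(Tr(C_{ρμ}^* C_{ρμ})) = 0` for all `ρ,μ`; in particular every entry of every block
`C_{ρμ}` lies in the Kac ideal. -/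
theorem caseI_C_blocks_in_kac (r : ℕ) (hr : 1 ≤ r) (q : Fin r → ℝ) (hq0 : ∀ ν, 0 < q ν)
    (hq1 : ∀ ν, q ν < 1) (hmono : StrictMono q) (M : Fin r → ℕ) (hM : ∀ ν, 1 ≤ M ν)
    (s : ℕ) (P : PolO (FCaseI r q M s)) :
    (∀ (τ : TracialState P.carrier) (ρ μ : Fin r),
        τ.toFun (∑ k : Fin (M μ), ∑ j : Fin (M ρ),
          star (P.u (.inl ⟨ρ, .inr j⟩) (.inl ⟨μ, .inl k⟩)) *
            P.u (.inl ⟨ρ, .inr j⟩) (.inl ⟨μ, .inl k⟩)) = 0) ∧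
      ∀ (ρ μ : Fin r) (j : Fin (M ρ)) (k : Fin (M μ)),
        P.u (.inl ⟨ρ, .inr j⟩) (.inl ⟨μ, .inl k⟩) ∈ kacIdeal P.carrier := by
  have hkey : ∀ (τ : TracialState P.carrier) (ρ μ : Fin r) (j : Fin (M ρ)) (k : Fin (M μ)),
      τ.toFun (star (P.u (.inl ⟨ρ, .inr j⟩) (.inl ⟨μ, .inl k⟩)) *
        P.u (.inl ⟨ρ, .inr j⟩) (.inl ⟨μ, .inl k⟩)) = 0 := by
    intro τ ρ μ j k
    refine key_vanish hq0 hq1 P τ ?_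
    intro h
    norm_num [eW] at h
  refine ⟨?_, ?_⟩
  · intro τ ρ μ
    rw [map_sum]
    refine Finset.sum_eq_zero fun k _ => ?_
    rw [map_sum]
    exact Finset.sum_eq_zero fun j _ => hkey τ ρ μ j k
  · intro ρ μ j k τ
    exact hkey τ ρ μ j k
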